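/- Let α, β be multiplicatively independent real numbers, both > 1, and let C > 1. Then there exists a real number γ > 1 such that the inequality |α^k - γ β^m| < C^{-(k+m)} has infinitely many solutions in pairs of positive integers (k, m). -/

import Mathlib

set_option maxHeartbeats 1000000

open Real

lemma key_approx {θ : ℝ} (hθ : Irrational θ) (hθpos : 0 < θ) {ε : ℝ} (hε : 0 < ε) :
    ∃ p q : ℕ, 0 < p ∧ 0 < q ∧ 0 < p * θ - q ∧ p * θ - q < ε := by
  have hm : 0 < min ε (θ / 2) := lt_min hε (by positivity)
  obtain ⟨n, hn1, hn2⟩ : ∃ n : ℕ, 0 < n ∧ 1 / ((n : ℝ) + 1) < min ε (θ / 2) := by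
    obtain ⟨n, hn⟩ := exists_nat_gt (1 / min ε (θ / 2))
    refine ⟨n + 1, Nat.succ_pos _, ?_⟩
    rw [div_lt_iff₀ (by positivity)]
    have h1 : 1 < (n:ℝ) * min ε (θ/2) := (div_lt_iff₀ hm).mp hn
    push_cast
    nlinarith [h1, hm]
  obtain ⟨j, k, hk0, hkn, habs⟩ := Real.exists_int_int_abs_mul_sub_le θ hn1
  have hsmall : |(k:ℝ) * θ - j| < min ε (θ / 2) := lt_of_le_of_lt habs hn2
  set δ : ℝ := (k:ℝ) * θ - j with hδdef
  have hδne : δ ≠ 0 := by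
    intro h
    apply hθ
    have hk : (k:ℝ) ≠ 0 := Int.cast_ne_zero.mpr hk0.ne'
    refine ⟨(j : ℚ) / (k : ℚ), ?_⟩
    push_cast
    field_simp
    linarith [h]
  have hkθ : θ ≤ (k:ℝ) * θ :=
    le_mul_of_one_le_left hθpos.le (by exact_mod_cast hk0)
  have hδlt : δ < θ / 2 := lt_of_le_of_lt (le_abs_self _) (hsmall.trans_le (min_le_right _ _))
  have hδgt : -(θ / 2) < δ := by
    have := (abs_lt.mp (hsmall.trans_le (min_le_right _ _))).1
    linarith
  have hδε : |δ| < ε := hsmall.trans_le (min_le_left _ _)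
  have hj1 : (1:ℤ) ≤ j := by
    have hjR : (0:ℝ) < j := by
      have : (j:ℝ) = (k:ℝ) * θ - δ := by rw [hδdef]; ring
      rw [this]; linarith
    have : (0:ℤ) < j := by exact_mod_cast hjR
    omega
  rcases lt_or_gt_of_ne hδne with hneg | hpos
  · -- δ < 0 case
    set d : ℝ := -δ with hd
    have hd0 : 0 < d := by simp [hd]; linarith
    have hdθ : d < θ / 2 := by simp [hd]; linarith
    have hdε : d < ε := by have := neg_abs_le δ; simp [hd]; nlinarith [abs_nonneg δ, hδε, neg_le_abs δ]
    set x : ℝ := θ / d with hx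
    have hx2 : 2 < x := by rw [hx, lt_div_iff₀ hd0]; linarith
    set N : ℤ := ⌈x⌉ - 1 with hN
    have hN1 : 1 ≤ N := by
      have h3 : (2:ℝ) < (⌈x⌉ : ℝ) := lt_of_lt_of_le hx2 (Int.le_ceil x)
      have : (2:ℤ) < ⌈x⌉ := by exact_mod_cast h3
      omega
    have hNx : (N:ℝ) < x := by
      have := Int.ceil_lt_add_one x
      push_cast [hN]
      linarith
    have hNx' : x ≤ (N:ℝ) + 1 := by
      have := Int.le_ceil x
      push_cast [hN]
      linarith
    have hv0 : 0 < θ + N * δ := by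
      have : (N:ℝ) * d < θ := by
        calc (N:ℝ) * d < x * d := by exact mul_lt_mul_of_pos_right hNx hd0
        _ = θ := by rw [hx]; field_simp
      simp only [hd] at this ⊢
      nlinarith
    have hvε : θ + N * δ < ε := by
      have : θ ≤ ((N:ℝ) + 1) * d := by
        calc θ = x * d := by rw [hx]; field_simp
        _ ≤ ((N:ℝ)+1) * d := mul_le_mul_of_nonneg_right hNx' hd0.le
      have h2 : θ + N * δ ≤ d := by simp only [hd] at this ⊢; nlinarith
      linarith
    refine ⟨(1 + N * k).toNat, (N * j).toNat, ?_, ?_, ?_, ?_⟩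
    · have : (1:ℤ) ≤ 1 + N * k := by nlinarith [hN1, hk0]
      omega
    · have : (1:ℤ) ≤ N * j := by nlinarith [hN1, hj1]
      omega
    all_goals {
      have h1 : (0:ℤ) ≤ 1 + N * k := by nlinarith [hN1, hk0]
      have h2 : (0:ℤ) ≤ N * j := by nlinarith [hN1, hj1]
      have e1 : (((1 + N * k).toNat : ℕ) : ℝ) = 1 + (N:ℝ) * k := by
        rw [← Int.cast_natCast, Int.toNat_of_nonneg h1]; push_cast; ring
      have e2 : (((N * j).toNat : ℕ) : ℝ) = (N:ℝ) * j := by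
        rw [← Int.cast_natCast, Int.toNat_of_nonneg h2]; push_cast; ring
      rw [e1, e2]
      have : (1 + (N:ℝ) * k) * θ - (N:ℝ) * j = θ + N * δ := by rw [hδdef]; ring
      rw [this]
      first | exact hv0 | exact hvε
    }
  · -- δ > 0 case
    refine ⟨k.toNat, j.toNat, ?_, ?_, ?_, ?_⟩
    · omega
    · omega
    all_goals {
      have e1 : ((k.toNat : ℕ) : ℝ) = (k:ℝ) := by
        rw [← Int.cast_natCast, Int.toNat_of_nonneg hk0.le]
      have e2 : ((j.toNat : ℕ) : ℝ) = (j:ℝ) := by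
        rw [← Int.cast_natCast, Int.toNat_of_nonneg (by omega : (0:ℤ) ≤ j)]
      rw [e1, e2, ← hδdef]
      first | exact hpos | exact lt_of_le_of_lt (le_abs_self _) hδε
    }

open Real

lemma irr_log_div (α β : ℝ) (hα : 1 < α) (hβ : 1 < β)
    (hmi : ∀ m n : ℤ, α ^ m * β ^ n = 1 → m = 0 ∧ n = 0) :
    Irrational (Real.log α / Real.log β) := by
  have ha : 0 < Real.log α := Real.log_pos hα
  have hb : 0 < Real.log β := Real.log_pos hβ
  have hα0 : (0:ℝ) < α := by linarith
  have hβ0 : (0:ℝ) < β := by linarith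
  rw [Irrational]
  intro ⟨r, hr⟩
  have hab : Real.log α = r * Real.log β := by
    field_simp at hr
    linarith [hr]
  have hden : ((r.den : ℤ) : ℝ) * Real.log α = (r.num : ℝ) * Real.log β := by
    have h1 : (r : ℝ) = (r.num : ℝ) / (r.den : ℝ) := by rw [Rat.cast_def]
    have hd0 : (0:ℝ) < (r.den : ℝ) := by exact_mod_cast r.pos
    rw [hab, h1]
    field_simp
    rw [Int.cast_natCast]; ring
  have key : α ^ (r.den : ℤ) * β ^ (-r.num) = 1 := by
    have h1 : Real.log (α ^ (r.den : ℤ) * β ^ (-r.num)) = 0 := by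
      rw [Real.log_mul (by positivity) (by positivity), Real.log_zpow, Real.log_zpow]
      push_cast
      push_cast at hden
      linarith [hden]
    have h2 : (0:ℝ) < α ^ (r.den : ℤ) * β ^ (-r.num) := by positivity
    have := Real.exp_log h2
    rw [h1, Real.exp_zero] at this
    exact this.symm
  have := (hmi _ _ key).1
  have hd := r.den_nz
  omega

lemma step_lemma {a b : ℝ} (ha : 0 < a) (hb : 0 < b) (hirr : Irrational (a / b))
    {B : ℝ} (hB : 0 < B) :
    ∃ pq : ℕ × ℕ, 0 < pq.1 ∧ 0 < pq.2 ∧ 0 < pq.1 * a - pq.2 * b ∧ pq.1 * a - pq.2 * b < B := by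
  obtain ⟨p, q, hp, hq, h1, h2⟩ := key_approx hirr (div_pos ha hb) (div_pos hB hb)
  refine ⟨(p, q), hp, hq, ?_, ?_⟩
  · have : (p:ℝ) * a - q * b = b * ((p:ℝ) * (a/b) - q) := by field_simp
    rw [this]
    positivity
  · have he : (p:ℝ) * a - q * b = b * ((p:ℝ) * (a/b) - q) := by field_simp
    rw [he]
    calc b * ((p:ℝ) * (a/b) - q) < b * (B / b) := by
          exact mul_lt_mul_of_pos_left h2 hb
      _ = B := by field_simp
theorem power_approximation
    (α β : ℝ) (hα : 1 < α) (hβ : 1 < β)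
    (hmi : ∀ m n : ℤ, α ^ m * β ^ n = 1 → m = 0 ∧ n = 0)
    (C : ℝ) (hC : 1 < C) :
    ∃ γ : ℝ, 1 < γ ∧
      {p : ℕ × ℕ | 0 < p.1 ∧ 0 < p.2 ∧
        |α ^ p.1 - γ * β ^ p.2| < (C ^ (p.1 + p.2))⁻¹}.Infinite := by
  have ha : 0 < Real.log α := Real.log_pos hα
  have hb : 0 < Real.log β := Real.log_pos hβ
  set a := Real.log α with ha_def
  set b := Real.log β with hb_def
  have hirr : Irrational (a / b) := irr_log_div α β hα hβ hmi
  have hC0 : (0:ℝ) < C := by linarith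
  have hβ0 : (0:ℝ) < β := by linarith
  have hchoice : ∀ x : ℕ × (ℕ × ℕ), ∃ pq : ℕ × ℕ, 0 < pq.1 ∧ 0 < pq.2 ∧
      0 < (pq.1:ℝ) * a - pq.2 * b ∧
      (pq.1:ℝ) * a - pq.2 * b <
        (2:ℝ)⁻¹ ^ (x.1 + 1) * ((C ^ (x.2.1 + x.2.2))⁻¹ * (β ^ x.2.2)⁻¹ / 8) :=
    fun x => step_lemma ha hb hirr (by positivity)
  choose nxt hn1 hn2 hn3 hn4 using hchoice
  obtain ⟨s0, hs01, hs02, hs03, hs04⟩ := step_lemma ha hb hirr one_pos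
  obtain ⟨F, hF0, hFs⟩ : ∃ F : ℕ → ℕ × ℕ, F 0 = s0 ∧
      ∀ i, F (i + 1) = ((F i).1 + (nxt (i, F i)).1, (F i).2 + (nxt (i, F i)).2) :=
    ⟨fun n => Nat.rec (motive := fun _ => ℕ × ℕ) s0
      (fun i s => (s.1 + (nxt (i, s)).1, s.2 + (nxt (i, s)).2)) n, rfl, fun i => rfl⟩
  obtain ⟨E, hEdef⟩ : ∃ E : ℕ → ℝ, ∀ i, E i = ((F i).1 : ℝ) * a - ((F i).2 : ℝ) * b :=
    ⟨_, fun i => rfl⟩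
  obtain ⟨tiny, htinydef⟩ : ∃ t : ℕ → ℝ,
      ∀ i, t i = (C ^ ((F i).1 + (F i).2))⁻¹ * (β ^ (F i).2)⁻¹ / 8 :=
    ⟨_, fun i => rfl⟩
  have htinypos : ∀ i, 0 < tiny i := fun i => by rw [htinydef i]; positivity
  have htinyle : ∀ i, tiny i ≤ 1 / 8 := by
    intro i
    rw [htinydef i]
    have h1 : (1:ℝ) ≤ C ^ ((F i).1 + (F i).2) := one_le_pow₀ hC.le
    have h2 : (1:ℝ) ≤ β ^ ((F i).2) := one_le_pow₀ hβ.le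
    have h3 : (C ^ ((F i).1 + (F i).2))⁻¹ ≤ 1 := inv_le_one_of_one_le₀ h1
    have h4 : (β ^ ((F i).2))⁻¹ ≤ 1 := inv_le_one_of_one_le₀ h2
    have h5 : (C ^ ((F i).1 + (F i).2))⁻¹ * (β ^ ((F i).2))⁻¹ ≤ 1 :=
      mul_le_one₀ h3 (by positivity) h4
    linarith
  have hKsucc : ∀ i, (F i).1 < (F (i + 1)).1 := by
    intro i; rw [hFs i]; have := hn1 (i, F i); simp only; omega
  have hMsucc : ∀ i, (F i).2 < (F (i + 1)).2 := by
    intro i; rw [hFs i]; have := hn2 (i, F i); simp only; omega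
  have hKmono : StrictMono fun i => (F i).1 := strictMono_nat_of_lt_succ hKsucc
  have hMmono : StrictMono fun i => (F i).2 := strictMono_nat_of_lt_succ hMsucc
  have hKpos : ∀ i, 0 < (F i).1 := by
    intro i
    have h0 : 0 < (F 0).1 := by rw [hF0]; exact hs01
    exact lt_of_lt_of_le h0 (hKmono.monotone (Nat.zero_le i))
  have hMpos : ∀ i, 0 < (F i).2 := by
    intro i
    have h0 : 0 < (F 0).2 := by rw [hF0]; exact hs02
    exact lt_of_lt_of_le h0 (hMmono.monotone (Nat.zero_le i))
  have htiny_anti : ∀ i j, i ≤ j → tiny j ≤ tiny i := by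
    intro i j hij
    rw [htinydef j, htinydef i]
    have hK : (F i).1 ≤ (F j).1 := hKmono.monotone hij
    have hM : (F i).2 ≤ (F j).2 := hMmono.monotone hij
    gcongr <;> first | exact hC.le | exact hβ.le | omega | positivity
  have hEdiff : ∀ i, E (i + 1) - E i = ((nxt (i, F i)).1 : ℝ) * a - ((nxt (i, F i)).2 : ℝ) * b := by
    intro i
    rw [hEdef (i + 1), hEdef i, hFs i]
    push_cast
    ring
  have hEstep_pos : ∀ i, 0 < E (i + 1) - E i := by
    intro i; rw [hEdiff i]; exact hn3 (i, F i)
  have hEstep_lt : ∀ i, E (i + 1) - E i < (2:ℝ)⁻¹ ^ (i + 1) * tiny i := by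
    intro i
    rw [hEdiff i, htinydef i]
    exact hn4 (i, F i)
  have hEmono : Monotone E := monotone_nat_of_le_succ fun i => by linarith [hEstep_pos i]
  have htail : ∀ i j, i ≤ j → E j - E i ≤ ((2:ℝ)⁻¹ ^ i - (2:ℝ)⁻¹ ^ j) * tiny i := by
    intro i j hij
    induction j, hij using Nat.le_induction with
    | base => simp
    | succ j hij ih =>
      have h1 := hEstep_lt j
      have h3 := htiny_anti i j hij
      have h5 : (2:ℝ)⁻¹ ^ (j + 1) * tiny j ≤ (2:ℝ)⁻¹ ^ (j + 1) * tiny i :=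
        mul_le_mul_of_nonneg_left h3 (by positivity)
      have h6 : ((2:ℝ)⁻¹ ^ i - (2:ℝ)⁻¹ ^ j) * tiny i + (2:ℝ)⁻¹ ^ (j + 1) * tiny i
          = ((2:ℝ)⁻¹ ^ i - (2:ℝ)⁻¹ ^ (j + 1)) * tiny i := by
        rw [pow_succ]
        ring
      linarith
  have hE0pos : 0 < E 0 := by rw [hEdef 0, hF0]; exact hs03
  have hE0lt : E 0 < 1 := by rw [hEdef 0, hF0]; exact hs04
  have hub : ∀ j, E j ≤ E 0 + tiny 0 := by
    intro j
    have h1 := htail 0 j (Nat.zero_le j)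
    have h2 : (0:ℝ) ≤ (2:ℝ)⁻¹ ^ j * tiny 0 := mul_nonneg (by positivity) (htinypos 0).le
    have h3 : ((2:ℝ)⁻¹ ^ 0 - (2:ℝ)⁻¹ ^ j) * tiny 0 = tiny 0 - (2:ℝ)⁻¹ ^ j * tiny 0 := by
      rw [pow_zero]; ring
    rw [h3] at h1
    linarith
  set L : ℝ := ⨆ i, E i with hLdef
  have hbdd : BddAbove (Set.range E) := ⟨E 0 + tiny 0, by rintro x ⟨j, rfl⟩; exact hub j⟩
  have hEleL : ∀ i, E i ≤ L := fun i => le_ciSup hbdd i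
  have hLle : ∀ i, L ≤ E i + (2:ℝ)⁻¹ ^ i * tiny i := by
    intro i
    refine ciSup_le fun j => ?_
    rcases le_total j i with h | h
    · have h2 : (0:ℝ) ≤ (2:ℝ)⁻¹ ^ i * tiny i := mul_nonneg (by positivity) (htinypos i).le
      linarith [hEmono h]
    · have h1 := htail i j h
      have hexp : ((2:ℝ)⁻¹ ^ i - (2:ℝ)⁻¹ ^ j) * tiny i
          = (2:ℝ)⁻¹ ^ i * tiny i - (2:ℝ)⁻¹ ^ j * tiny i := by ring
      have h2 : (0:ℝ) ≤ (2:ℝ)⁻¹ ^ j * tiny i := mul_nonneg (by positivity) (htinypos i).le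
      rw [hexp] at h1
      linarith
  have hL2 : L ≤ 2 := by
    refine ciSup_le fun j => ?_
    have := hub j
    have := htinyle 0
    linarith
  have hLpos : 0 < L := lt_of_lt_of_le hE0pos (hEleL 0)
  refine ⟨Real.exp L, ?_, ?_⟩
  · have := Real.exp_lt_exp.mpr hLpos
    rwa [Real.exp_zero] at this
  · refine Set.infinite_of_injective_forall_mem (f := F) ?_ ?_

    · intro i j hij
      exact hKmono.injective (congrArg Prod.fst hij)
    · intro i
      refine ⟨hKpos i, hMpos i, ?_⟩
      have hβm : Real.exp (((F i).2 : ℝ) * b) = β ^ (F i).2 := by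
        rw [Real.exp_nat_mul, hb_def, Real.exp_log (by linarith : (0:ℝ) < β)]
      have hαk2 : α ^ (F i).1 = Real.exp (E i) * β ^ (F i).2 := by
        rw [← hβm, ← Real.exp_add]
        have harg : E i + ((F i).2 : ℝ) * b = ((F i).1 : ℝ) * a := by
          rw [hEdef i]; ring
        rw [harg, Real.exp_nat_mul, ha_def, Real.exp_log (by linarith : (0:ℝ) < α)]
      have hEiL : E i < L := lt_of_lt_of_le (by linarith [hEstep_pos i]) (hEleL (i + 1))
      have h7 : Real.exp (E i) < Real.exp L := Real.exp_lt_exp.mpr hEiL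
      have hbm0 : (0:ℝ) < β ^ (F i).2 := by positivity
      have hrw : α ^ (F i).1 - Real.exp L * β ^ (F i).2
          = (Real.exp (E i) - Real.exp L) * β ^ (F i).2 := by
        rw [hαk2]; ring
      rw [hrw, abs_of_neg (by nlinarith)]
      have h8 := Real.add_one_le_exp (E i - L)
      have h9 : Real.exp (E i) = Real.exp L * Real.exp (E i - L) := by
        rw [← Real.exp_add]; ring_nf
      have hbound : Real.exp L - Real.exp (E i) ≤ (L - E i) * Real.exp L := by
        nlinarith [Real.exp_pos L]
      have h10 : Real.exp L ≤ Real.exp 2 := Real.exp_le_exp.mpr hL2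
      have h11 : Real.exp 2 < 8 := by
        have hd9 := Real.exp_one_lt_d9
        have h2e : Real.exp 2 = Real.exp 1 * Real.exp 1 := by
          rw [← Real.exp_add]; norm_num
        nlinarith [Real.exp_pos 1]
      have hylt8 : Real.exp L < 8 := lt_of_le_of_lt h10 h11
      have hLEt : L - E i ≤ tiny i := by
        have h12 := hLle i
        have h13 : (2:ℝ)⁻¹ ^ i ≤ 1 := pow_le_one₀ (by norm_num) (by norm_num)
        nlinarith [htinypos i]
      have hmain : (L - E i) * Real.exp L < tiny i * 8 := by
        have hx : 0 < L - E i := by linarith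
        have hs1 : (L - E i) * Real.exp L < (L - E i) * 8 :=
          mul_lt_mul_of_pos_left hylt8 hx
        have hs2 : (L - E i) * 8 ≤ tiny i * 8 := by linarith
        linarith
      have hfin : tiny i * 8 * β ^ (F i).2 = (C ^ ((F i).1 + (F i).2))⁻¹ := by
        rw [htinydef i]
        field_simp
      calc -((Real.exp (E i) - Real.exp L) * β ^ (F i).2)
          = (Real.exp L - Real.exp (E i)) * β ^ (F i).2 := by ring
        _ ≤ ((L - E i) * Real.exp L) * β ^ (F i).2 :=
            mul_le_mul_of_nonneg_right hbound hbm0.le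
        _ < (tiny i * 8) * β ^ (F i).2 := mul_lt_mul_of_pos_right hmain hbm0
        _ = (C ^ ((F i).1 + (F i).2))⁻¹ := hfin
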